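/- For nonnegative integers k, l, r with l+r ≤ k, ∑_{n=l+r}^{k} (-1)^n C(2k, k-n) · C(n-r, n-l-r) = (-1)^{l+r} C(2k-l-1, k-l-r). -/

import Mathlib

/-- Binomial coefficient `C(n,r)` for integer arguments: zero if `r < 0` or
`0 ≤ n < r`, the usual binomial for `0 ≤ r ≤ n`, and the generalized binomial
for negative upper index. -/
def C (n r : ℤ) : ℤ :=
  if r < 0 then 0
  else if 0 ≤ n then (n.toNat.choose r.toNat : ℤ)
  else (-1) ^ r.toNat * ((r - n - 1).toNat.choose r.toNat : ℤ)

open PowerSeries in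
lemma coeff_one_sub_X_pow (n m : ℕ) :
    (PowerSeries.coeff m) ((1 - PowerSeries.X : ℤ⟦X⟧) ^ n) = (-1) ^ m * (n.choose m : ℤ) := by
  induction n generalizing m with
  | zero =>
    simp only [pow_zero, PowerSeries.coeff_one]
    rcases Nat.eq_zero_or_pos m with rfl | hm
    · simp
    · simp [Nat.choose_eq_zero_of_lt hm, if_neg hm.ne']
  | succ n ih =>
    rw [pow_succ, mul_sub, mul_one, map_sub, ih]
    rcases Nat.eq_zero_or_pos m with rfl | hm
    · simp [PowerSeries.coeff_zero_mul_X]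
    · obtain ⟨m, rfl⟩ := Nat.exists_eq_add_of_lt hm
      rw [zero_add, PowerSeries.coeff_succ_mul_X, ih, Nat.choose_succ_succ]
      push_cast
      ring

open PowerSeries in
lemma key (N l M : ℕ) (h : l + 1 ≤ N) :
    ∑ m ∈ Finset.range (M + 1), (-1 : ℤ) ^ m * (N.choose (M - m)) * ((l + m).choose l)
      = ((N - (l + 1)).choose M : ℤ) := by
  have h1 : ((1 - X : ℤ⟦X⟧) ^ (N - (l + 1)))
      = (1 - X) ^ N * (invOneSubPow ℤ (l + 1)).val := by
    have hN : (1 - X : ℤ⟦X⟧) ^ N = (1 - X) ^ (N - (l + 1)) * (1 - X) ^ (l + 1) := by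
      rw [← pow_add]; congr 1; omega
    have hu : (1 - X : ℤ⟦X⟧) ^ (l + 1) * (invOneSubPow ℤ (l + 1)).val = 1 := by
      rw [← invOneSubPow_inv_eq_one_sub_pow]; exact (invOneSubPow ℤ (l + 1)).inv_val
    rw [hN, mul_assoc, hu, mul_one]
  have h2 := congrArg (PowerSeries.coeff M) h1
  rw [coeff_one_sub_X_pow, PowerSeries.coeff_mul,
    Finset.Nat.sum_antidiagonal_eq_sum_range_succ_mk] at h2
  simp only [invOneSubPow_val_succ_eq_mk_add_choose, PowerSeries.coeff_mk,
    coeff_one_sub_X_pow] at h2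
  rw [← Finset.sum_range_reflect] at h2
  have h3 : ∀ j ∈ Finset.range M.succ,
      (-1 : ℤ) ^ (M.succ - 1 - j) * (N.choose (M.succ - 1 - j))
        * ((l + (M - (M.succ - 1 - j))).choose l)
      = (-1) ^ M * ((-1 : ℤ) ^ j * (N.choose (M - j)) * ((l + j).choose l)) := by
    intro j hj
    rw [Finset.mem_range] at hj
    have e1 : M.succ - 1 - j = M - j := by omega
    have e2 : M - (M - j) = j := by omega
    have e3 : (-1 : ℤ) ^ (M - j) = (-1) ^ M * (-1) ^ j := by
      have : (-1 : ℤ) ^ (M - j) * (-1) ^ j = (-1) ^ M := by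
        rw [← pow_add]; congr 1; omega
      have hsq : ((-1 : ℤ) ^ j) * ((-1 : ℤ) ^ j) = 1 := by
        rw [← pow_add]; exact Even.neg_one_pow ⟨j, rfl⟩
      calc (-1 : ℤ) ^ (M - j) = (-1 : ℤ) ^ (M - j) * ((-1) ^ j * (-1) ^ j) := by
            rw [hsq, mul_one]
        _ = (-1) ^ M * (-1) ^ j := by rw [← mul_assoc, this]
    rw [e1, e2, e3]; ring
  rw [Finset.sum_congr rfl h3, ← Finset.mul_sum] at h2
  have hM : ((-1 : ℤ) ^ M) * ((-1 : ℤ) ^ M) = 1 := by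
    rw [← pow_add]; exact Even.neg_one_pow ⟨M, rfl⟩
  calc ∑ m ∈ Finset.range (M + 1), (-1 : ℤ) ^ m * (N.choose (M - m)) * ((l + m).choose l)
      = ((-1 : ℤ) ^ M * (-1 : ℤ) ^ M) *
        ∑ m ∈ Finset.range M.succ, (-1 : ℤ) ^ m * (N.choose (M - m)) * ((l + m).choose l) := by
        rw [hM, one_mul]
    _ = ((N - (l + 1)).choose M : ℤ) := by rw [mul_assoc, ← h2, ← mul_assoc, hM, one_mul]

lemma C_natCast (a b : ℕ) : C (a : ℤ) (b : ℤ) = (a.choose b : ℤ) := by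
  simp [C]

theorem stmt_6 (k l r : ℕ) (h : l + r ≤ k) :
    ∑ n ∈ Finset.Icc (l + r) k,
      (-1 : ℤ) ^ n * C (2 * (k : ℤ)) ((k : ℤ) - n) * C ((n : ℤ) - r) ((n : ℤ) - l - r)
      = (-1) ^ (l + r) * C (2 * (k : ℤ) - l - 1) ((k : ℤ) - l - r) := by
  rcases Nat.eq_zero_or_pos k with rfl | hk
  · obtain ⟨rfl, rfl⟩ : l = 0 ∧ r = 0 := by omega
    decide
  · set M := k - l - r with hM
    rw [← Finset.Ico_add_one_right_eq_Icc, Finset.sum_Ico_eq_sum_range]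
    have hrange : k + 1 - (l + r) = M + 1 := by omega
    rw [hrange]
    have hterm : ∀ m ∈ Finset.range (M + 1),
        (-1 : ℤ) ^ (l + r + m) * C (2 * (k : ℤ)) ((k : ℤ) - ((l + r + m : ℕ) : ℤ))
          * C (((l + r + m : ℕ) : ℤ) - r) (((l + r + m : ℕ) : ℤ) - l - r)
        = (-1) ^ (l + r) *
          ((-1 : ℤ) ^ m * ((2 * k).choose (M - m)) * ((l + m).choose l)) := by
      intro m hm
      rw [Finset.mem_range] at hm
      have e1 : (k : ℤ) - ((l + r + m : ℕ) : ℤ) = ((M - m : ℕ) : ℤ) := by omega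
      have e2 : ((l + r + m : ℕ) : ℤ) - r = ((l + m : ℕ) : ℤ) := by omega
      have e3 : ((l + r + m : ℕ) : ℤ) - l - r = ((m : ℕ) : ℤ) := by omega
      have e4 : (2 * (k : ℤ)) = ((2 * k : ℕ) : ℤ) := by push_cast; ring
      rw [e1, e2, e3, e4, C_natCast, C_natCast, pow_add]
      have e5 : (l + m).choose m = (l + m).choose l := by
        have h5 := Nat.choose_symm (Nat.le_add_right l m)
        rwa [Nat.add_sub_cancel_left] at h5
      rw [e5]; ring
    rw [Finset.sum_congr rfl hterm, ← Finset.mul_sum,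
      key (2 * k) l M (by omega)]
    congr 1
    have e6 : 2 * (k : ℤ) - l - 1 = ((2 * k - (l + 1) : ℕ) : ℤ) := by push_cast [Nat.cast_sub (by omega : l + 1 ≤ 2 * k)]; ring
    have e7 : (k : ℤ) - l - r = ((M : ℕ) : ℤ) := by omega
    rw [e6, e7, C_natCast]
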